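/- arXiv:2210.01268 — 11 statements merged into one kernel-verified Lean document; each statement's English description precedes it below -/
import Mathlib

section
/- Let M_0, M_1, ..., M_k be n×n real matrices, and write each M_i = Λ_i − C_i where Λ_i is the diagonal part of M_i (assumed to have all positive diagonal entries). If the spectral radius of the entrywise maximum matrix W := max_{0≤i≤k} (Λ_i^{-1} |C_i|) satisfies ρ(W) < 1, then for every tuple (D_0, ..., D_k) of nonnegative diagonal matrices with entries in [0,1] and D_0 + ... + D_k = I, the matrix S = Σ_{i=0}^k D_i M_i is nonsingular. -/
open Matrix Filter

attribute [local instance] Matrix.linftyOpNormedRing Matrix.linftyOpNormedAlgebra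

set_option maxHeartbeats 1000000 in
theorem stmt_4 (n k : ℕ) (M : Fin (k+1) → Matrix (Fin n) (Fin n) ℝ)
    (hdiag : ∀ i s, 0 < M i s s)
    (W : Matrix (Fin n) (Fin n) ℝ)
    (hW : ∀ s t, W s t = ⨆ i, |(Matrix.diagonal (fun u => M i u u) - M i) s t| / M i s s)
    (hρ : spectralRadius ℂ (W.map (Complex.ofReal : ℝ → ℂ)) < 1)
    (d : Fin (k+1) → Fin n → ℝ)
    (hd : ∀ i s, d i s ∈ Set.Icc (0:ℝ) 1) (hsum : ∀ s, ∑ i, d i s = 1) :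
    IsUnit (∑ i, Matrix.diagonal (d i) * M i) := by
  classical
  set S : Matrix (Fin n) (Fin n) ℝ := ∑ i, Matrix.diagonal (d i) * M i with hSdef
  -- entry formula for S
  have hSapp : ∀ s t, S s t = ∑ i, d i s * M i s t := by
    intro s t
    simp [hSdef, Matrix.sum_apply, Matrix.diagonal_mul]
  -- W is nonnegative
  have hW0 : ∀ s t, 0 ≤ W s t := by
    intro s t
    rw [hW s t]
    have : |(Matrix.diagonal (fun u => M 0 u u) - M 0) s t| / M 0 s s ≤
        ⨆ i, |(Matrix.diagonal (fun u => M i u u) - M i) s t| / M i s s := by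
      apply le_ciSup (f := fun i => |(Matrix.diagonal (fun u => M i u u) - M i) s t| / M i s s)
        (Set.Finite.bddAbove (Set.finite_range _)) 0
    refine le_trans ?_ this
    exact div_nonneg (abs_nonneg _) (hdiag 0 s).le
  -- bound on each summand
  have hWb : ∀ i s t, |(Matrix.diagonal (fun u => M i u u) - M i) s t| ≤ W s t * M i s s := by
    intro i s t
    have h1 : |(Matrix.diagonal (fun u => M i u u) - M i) s t| / M i s s ≤ W s t := by
      rw [hW s t]
      exact le_ciSup (f := fun i => |(Matrix.diagonal (fun u => M i u u) - M i) s t| / M i s s)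
        (Set.Finite.bddAbove (Set.finite_range _)) i
    calc |(Matrix.diagonal (fun u => M i u u) - M i) s t|
        = (|(Matrix.diagonal (fun u => M i u u) - M i) s t| / M i s s) * M i s s :=
          (div_mul_cancel₀ _ (hdiag i s).ne').symm
      _ ≤ W s t * M i s s := by
          exact mul_le_mul_of_nonneg_right h1 (hdiag i s).le
  have hCb : ∀ i s t, s ≠ t → |M i s t| ≤ W s t * M i s s := by
    intro i s t hst
    have := hWb i s t
    rwa [Matrix.sub_apply, Matrix.diagonal_apply_ne _ hst, zero_sub, abs_neg] at this
  -- diagonal of S is positive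
  have hL : ∀ s, 0 < S s s := by
    intro s
    rw [hSapp]
    obtain ⟨i₀, -, hi₀⟩ := Finset.exists_min_image Finset.univ (fun i => M i s s)
      ⟨0, Finset.mem_univ 0⟩
    have hc : 0 < M i₀ s s := hdiag i₀ s
    have h1 : ∑ i, d i s * M i₀ s s ≤ ∑ i, d i s * M i s s := by
      refine Finset.sum_le_sum fun i _ => ?_
      exact mul_le_mul_of_nonneg_left (hi₀ i (Finset.mem_univ i)) (hd i s).1
    have h2 : ∑ i, d i s * M i₀ s s = M i₀ s s := by
      rw [← Finset.sum_mul, hsum, one_mul]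
    linarith
  -- off-diagonal bound
  have hSb : ∀ s t, s ≠ t → |S s t| ≤ W s t * S s s := by
    intro s t hst
    rw [hSapp]
    calc |∑ i, d i s * M i s t| ≤ ∑ i, |d i s * M i s t| := Finset.abs_sum_le_sum_abs _ _
      _ ≤ ∑ i, d i s * (W s t * M i s s) := by
          refine Finset.sum_le_sum fun i _ => ?_
          rw [abs_mul, abs_of_nonneg (hd i s).1]
          exact mul_le_mul_of_nonneg_left (hCb i s t hst) (hd i s).1
      _ = W s t * ∑ i, d i s * M i s s := by
          rw [Finset.mul_sum]; congr 1; ext i; ring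
      _ = W s t * S s s := by rw [hSapp]
  -- suppose S is not invertible
  rw [Matrix.isUnit_iff_isUnit_det, isUnit_iff_ne_zero]
  intro hdet
  obtain ⟨v, hv, hSv⟩ := (Matrix.exists_mulVec_eq_zero_iff).2 hdet
  set u : Fin n → ℝ := fun t => |v t| with hu_def
  have hu0 : ∀ t, 0 ≤ u t := fun t => abs_nonneg _
  -- key inequality: u ≤ W *ᵥ u
  have hkey : ∀ s, u s ≤ (W.mulVec u) s := by
    intro s
    have h0 : ∑ t, S s t * v t = 0 := by
      have := congrFun hSv s
      simpa [Matrix.mulVec, dotProduct] using this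
    have h1 : S s s * v s = -∑ t ∈ Finset.univ.erase s, S s t * v t := by
      have := Finset.add_sum_erase Finset.univ (fun t => S s t * v t) (Finset.mem_univ s)
      rw [← this] at h0
      linarith
    have h2 : S s s * u s ≤ S s s * ∑ t, W s t * u t := by
      calc S s s * u s = |S s s * v s| := by
            rw [abs_mul, abs_of_pos (hL s)]
        _ = |∑ t ∈ Finset.univ.erase s, S s t * v t| := by rw [h1, abs_neg]
        _ ≤ ∑ t ∈ Finset.univ.erase s, |S s t * v t| := Finset.abs_sum_le_sum_abs _ _
        _ ≤ ∑ t ∈ Finset.univ.erase s, (W s t * S s s) * u t := by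
            refine Finset.sum_le_sum fun t ht => ?_
            rw [abs_mul]
            exact mul_le_mul_of_nonneg_right
              (hSb s t (Ne.symm (Finset.ne_of_mem_erase ht))) (hu0 t)
        _ ≤ ∑ t, (W s t * S s s) * u t := by
            refine Finset.sum_le_sum_of_subset_of_nonneg (Finset.erase_subset _ _)
              fun t _ _ => ?_
            have := hW0 s t
            have := hL s
            have := hu0 t
            positivity
        _ = S s s * ∑ t, W s t * u t := by
            rw [Finset.mul_sum]; congr 1; ext t; ring
    have h3 : u s ≤ ∑ t, W s t * u t := le_of_mul_le_mul_left (by linarith [h2]) (hL s)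
    simpa [Matrix.mulVec, dotProduct] using h3
  -- powers of W are nonnegative
  have hWpow0 : ∀ m s t, 0 ≤ (W ^ m) s t := by
    intro m
    induction m with
    | zero => intro s t; by_cases h : s = t <;> simp [h, Matrix.one_apply]
    | succ m ih =>
      intro s t
      rw [pow_succ, Matrix.mul_apply]
      exact Finset.sum_nonneg fun j _ => mul_nonneg (ih s j) (hW0 j t)
  -- iterate the key inequality
  have hiter : ∀ m s, u s ≤ ((W ^ m).mulVec u) s := by
    intro m
    induction m with
    | zero => intro s; simp [Matrix.one_mulVec]
    | succ m ih =>
      intro s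
      have step : (W.mulVec u) s ≤ (W.mulVec ((W ^ m).mulVec u)) s := by
        simp only [Matrix.mulVec, dotProduct]
        exact Finset.sum_le_sum fun t _ =>
          mul_le_mul_of_nonneg_left (ih t) (hW0 s t)
      calc u s ≤ (W.mulVec u) s := hkey s
        _ ≤ (W.mulVec ((W ^ m).mulVec u)) s := step
        _ = ((W ^ (m+1)).mulVec u) s := by
            rw [pow_succ', Matrix.mulVec_mulVec]
  -- Gelfand's formula gives a power with small norm
  have hgel := spectrum.pow_nnnorm_pow_one_div_tendsto_nhds_spectralRadius
    (W.map (Complex.ofReal : ℝ → ℂ))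
  have hev : ∀ᶠ m : ℕ in atTop,
      ((‖(W.map (Complex.ofReal : ℝ → ℂ)) ^ m‖₊ : ENNReal) ^ (1 / (m:ℝ)) < 1) :=
    hgel.eventually_lt_const hρ
  obtain ⟨m, hmlt, hm1⟩ := (hev.and (eventually_ge_atTop 1)).exists
  have hnn : ‖(W.map (Complex.ofReal : ℝ → ℂ)) ^ m‖₊ < 1 := by
    by_contra h
    push_neg at h
    have h1 : (1 : ENNReal) ≤ (‖(W.map (Complex.ofReal : ℝ → ℂ)) ^ m‖₊ : ENNReal) := by
      exact_mod_cast h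
    have h2 : (1 : ENNReal) = (1 : ENNReal) ^ (1 / (m:ℝ)) := by rw [ENNReal.one_rpow]
    have h3 : (1 : ENNReal) ^ (1 / (m:ℝ)) ≤
        ((‖(W.map (Complex.ofReal : ℝ → ℂ)) ^ m‖₊ : ENNReal)) ^ (1 / (m:ℝ)) :=
      ENNReal.rpow_le_rpow h1 (by positivity)
    exact absurd hmlt (not_lt.2 (h2 ▸ h3))
  -- the m-th power commutes with the entrywise map
  have hmap : (W.map (Complex.ofReal : ℝ → ℂ)) ^ m = (W ^ m).map (Complex.ofReal : ℝ → ℂ) := by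
    have : (W.map (Complex.ofReal : ℝ → ℂ)) = Complex.ofRealHom.mapMatrix W := by
      rw [RingHom.mapMatrix_apply]; rfl
    rw [this, ← map_pow, RingHom.mapMatrix_apply]; rfl
  -- row sums of W ^ m are < 1
  have hrow : ∀ s, ∑ t, (W ^ m) s t < 1 := by
    intro s
    have hle : ∑ t, ‖((W ^ m).map (Complex.ofReal : ℝ → ℂ)) s t‖₊ ≤
        ‖(W ^ m).map (Complex.ofReal : ℝ → ℂ)‖₊ := by
      rw [Matrix.linfty_opNNNorm_def]
      exact Finset.le_sup (f := fun i => ∑ j, ‖((W ^ m).map (Complex.ofReal : ℝ → ℂ)) i j‖₊)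
        (Finset.mem_univ s)
    have hlt : ∑ t, ‖((W ^ m).map (Complex.ofReal : ℝ → ℂ)) s t‖₊ < 1 := by
      refine lt_of_le_of_lt hle ?_
      rw [hmap] at hnn
      exact hnn
    have hltR : ((∑ t, ‖((W ^ m).map (Complex.ofReal : ℝ → ℂ)) s t‖₊ : NNReal) : ℝ) < 1 := by
      exact_mod_cast hlt
    rw [NNReal.coe_sum] at hltR
    have heq : ∑ t, (W ^ m) s t
        = ∑ t, ((‖((W ^ m).map (Complex.ofReal : ℝ → ℂ)) s t‖₊ : NNReal) : ℝ) := by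
      refine Finset.sum_congr rfl fun t _ => ?_
      rw [coe_nnnorm, Matrix.map_apply, Complex.norm_real, Real.norm_eq_abs, abs_of_nonneg (hWpow0 m s t)]
    rw [heq]
    exact hltR
  -- derive the contradiction
  obtain ⟨t₀, ht₀⟩ := Function.ne_iff.1 hv
  have hut₀ : 0 < u t₀ := abs_pos.2 ht₀
  obtain ⟨s₀, -, hmax⟩ := Finset.exists_max_image Finset.univ u ⟨t₀, Finset.mem_univ t₀⟩
  have hus₀ : 0 < u s₀ := lt_of_lt_of_le hut₀ (hmax t₀ (Finset.mem_univ t₀))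
  have hfinal : u s₀ < u s₀ := by
    calc u s₀ ≤ ((W ^ m).mulVec u) s₀ := hiter m s₀
      _ = ∑ t, (W ^ m) s₀ t * u t := by simp [Matrix.mulVec, dotProduct]
      _ ≤ ∑ t, (W ^ m) s₀ t * u s₀ := Finset.sum_le_sum fun t _ =>
          mul_le_mul_of_nonneg_left (hmax t (Finset.mem_univ t)) (hWpow0 m s₀ t)
      _ = (∑ t, (W ^ m) s₀ t) * u s₀ := by rw [Finset.sum_mul]
      _ < 1 * u s₀ := mul_lt_mul_of_pos_right (hrow s₀) hus₀
      _ = u s₀ := one_mul _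
  exact absurd hfinal (lt_irrefl _)
end

section
/- There exist 2×2 symmetric positive definite matrices M_0 and M_1 (namely M_0 = [[2,1],[1,1]] and M_1 = [[1,1],[1,2]]) and nonnegative diagonal matrices D_0 = diag(0,1), D_1 = diag(1,0) with D_0 + D_1 = I such that D_0 M_0 + D_1 M_1 is singular. -/
open Matrix

lemma herm2 (a b c : ℝ) : (!![a, b; b, c] : Matrix (Fin 2) (Fin 2) ℝ).IsHermitian := by
  ext i j; fin_cases i <;> fin_cases j <;> simp [Matrix.conjTranspose_apply]

lemma nz2 {x : Fin 2 → ℝ} (hx : x ≠ 0) : x 0 ≠ 0 ∨ x 1 ≠ 0 := by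
  by_contra h; push_neg at h
  exact hx (funext fun i => by fin_cases i <;> simp [h.1, h.2])

lemma pd1 : (!![2, 1; 1, 1] : Matrix (Fin 2) (Fin 2) ℝ).PosDef := by
  refine Matrix.PosDef.of_dotProduct_mulVec_pos (herm2 2 1 1) fun x hx => ?_
  simp only [dotProduct, mulVec, Fin.sum_univ_two, RCLike.star_def, map_ofNat, Matrix.cons_val', Matrix.cons_val_zero, Matrix.cons_val_one, Matrix.head_cons, Matrix.head_fin_const, star_trivial]
  simp [dotProduct, Fin.sum_univ_two]
  rcases nz2 hx with h | h <;>
  nlinarith [sq_nonneg (x 0 + x 1), mul_self_pos.2 h, sq_nonneg (x 0), sq_nonneg (x 1)]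

lemma pd2 : (!![1, 1; 1, 2] : Matrix (Fin 2) (Fin 2) ℝ).PosDef := by
  refine Matrix.PosDef.of_dotProduct_mulVec_pos (herm2 1 1 2) fun x hx => ?_
  simp [dotProduct, mulVec, Fin.sum_univ_two]
  rcases nz2 hx with h | h <;>
  nlinarith [sq_nonneg (x 0 + x 1), mul_self_pos.2 h, sq_nonneg (x 0), sq_nonneg (x 1)]

theorem stmt_5 :
    ∃ (M₀ M₁ D₀ D₁ : Matrix (Fin 2) (Fin 2) ℝ),
      M₀ = !![2, 1; 1, 1] ∧ M₁ = !![1, 1; 1, 2] ∧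
      M₀.PosDef ∧ M₁.PosDef ∧
      D₀ = Matrix.diagonal ![0, 1] ∧ D₁ = Matrix.diagonal ![1, 0] ∧
      (∀ i, D₀ i i ∈ Set.Icc (0:ℝ) 1) ∧ (∀ i, D₁ i i ∈ Set.Icc (0:ℝ) 1) ∧
      D₀ + D₁ = 1 ∧
      ¬ IsUnit (D₀ * M₀ + D₁ * M₁) := by
  refine ⟨_, _, _, _, rfl, rfl, pd1, pd2, rfl, rfl, ?_, ?_, ?_, ?_⟩
  · intro i; fin_cases i <;> simp
  · intro i; fin_cases i <;> simp
  · ext i j; fin_cases i <;> fin_cases j <;> simp [Matrix.one_apply]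
  · rw [Matrix.isUnit_iff_isUnit_det]
    have : Matrix.diagonal ![(0:ℝ), 1] * !![2, 1; 1, 1] + Matrix.diagonal ![1, 0] * !![1, 1; 1, 2] = !![1, 1; 1, 1] := by
      ext i j; fin_cases i <;> fin_cases j <;> simp [Matrix.mul_apply, Fin.sum_univ_two]
    rw [this]
    simp [Matrix.det_fin_two_of]
end

section
/- Let M_0, ..., M_k be n×n real matrices each of which is strictly diagonally dominant (|m_{ss}^{(i)}| > Σ_{t≠s} |m_{st}^{(i)}| for every row s), and suppose for each row index s the diagonal entries (M_0)_{ss}, ..., (M_k)_{ss} all have the same sign. Then for any nonnegative diagonal matrices D_0, ..., D_k with entries in [0,1] and D_0 + ... + D_k = I, the matrix S = Σ_{i=0}^k D_i M_i is strictly diagonally dominant (hence nonsingular). -/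
open Matrix

/-- Strict diagonal dominance. -/
def SDD {n : ℕ} (A : Matrix (Fin n) (Fin n) ℝ) : Prop :=
  ∀ s, ∑ t ∈ Finset.univ.erase s, |A s t| < |A s s|

theorem stmt_6 (n k : ℕ) (M : Fin (k+1) → Matrix (Fin n) (Fin n) ℝ)
    (hsdd : ∀ i, SDD (M i))
    (hsign : ∀ s, (∀ i, 0 < M i s s) ∨ (∀ i, M i s s < 0))
    (d : Fin (k+1) → Fin n → ℝ)
    (hd : ∀ i s, d i s ∈ Set.Icc (0:ℝ) 1) (hsum : ∀ s, ∑ i, d i s = 1) :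
    SDD (∑ i, Matrix.diagonal (d i) * M i) := by
  intro s
  have hS : ∀ t, (∑ i, Matrix.diagonal (d i) * M i) s t = ∑ i, d i s * M i s t := by
    intro t
    simp [Matrix.sum_apply, Matrix.diagonal_mul]
  have hd0 : ∀ i, 0 ≤ d i s := fun i => (hd i s).1
  -- exists i with d i s > 0
  have hex : ∃ i, 0 < d i s := by
    by_contra h
    push_neg at h
    have : ∑ i, d i s = 0 :=
      Finset.sum_eq_zero fun i _ => le_antisymm (h i) (hd0 i)
    simp [hsum s] at this
  obtain ⟨i0, hi0⟩ := hex
  -- step 1: bound off-diagonal sum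
  have h1 : ∑ t ∈ Finset.univ.erase s, |(∑ i, Matrix.diagonal (d i) * M i) s t|
      ≤ ∑ i, d i s * ∑ t ∈ Finset.univ.erase s, |M i s t| := by
    rw [show (∑ i, d i s * ∑ t ∈ Finset.univ.erase s, |M i s t|)
        = ∑ t ∈ Finset.univ.erase s, ∑ i, d i s * |M i s t| by
      rw [Finset.sum_comm]
      exact Finset.sum_congr rfl fun i _ => Finset.mul_sum _ _ _]
    refine Finset.sum_le_sum fun t _ => ?_
    rw [hS t]
    calc |∑ i, d i s * M i s t| ≤ ∑ i, |d i s * M i s t| := Finset.abs_sum_le_sum_abs _ _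
      _ = ∑ i, d i s * |M i s t| := by
          refine Finset.sum_congr rfl fun i _ => ?_
          rw [abs_mul, abs_of_nonneg (hd0 i)]
  -- step 2: strict inequality
  have h2 : ∑ i, d i s * ∑ t ∈ Finset.univ.erase s, |M i s t|
      < ∑ i, d i s * |M i s s| := by
    refine Finset.sum_lt_sum (fun i _ => mul_le_mul_of_nonneg_left (le_of_lt (hsdd i s)) (hd0 i))
      ⟨i0, Finset.mem_univ i0, ?_⟩
    exact mul_lt_mul_of_pos_left (hsdd i0 s) hi0
  -- step 3: identify |S s s|
  have h3 : ∑ i, d i s * |M i s s| = |(∑ i, Matrix.diagonal (d i) * M i) s s| := by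
    rw [hS s]
    rcases hsign s with hp | hn
    · rw [abs_of_nonneg (Finset.sum_nonneg fun i _ =>
        mul_nonneg (hd0 i) (le_of_lt (hp i)))]
      exact Finset.sum_congr rfl fun i _ => by rw [abs_of_pos (hp i)]
    · rw [abs_of_nonpos (Finset.sum_nonpos fun i _ =>
        mul_nonpos_of_nonneg_of_nonpos (hd0 i) (le_of_lt (hn i))), ← Finset.sum_neg_distrib]
      exact Finset.sum_congr rfl fun i _ => by rw [abs_of_neg (hn i)]; ring
  calc ∑ t ∈ Finset.univ.erase s, |(∑ i, Matrix.diagonal (d i) * M i) s t|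
      ≤ ∑ i, d i s * ∑ t ∈ Finset.univ.erase s, |M i s t| := h1
    _ < ∑ i, d i s * |M i s s| := h2
    _ = _ := h3
end

section
/- Let M_0, ..., M_k be n×n strictly diagonally dominant matrices whose s-th diagonal entries have the same sign for each s, and let D_0, ..., D_k be nonnegative diagonal matrices with entries in [0,1] and Σ D_i = I. Then with S = Σ_{i=0}^k D_i M_i and e the all-ones vector, ⟨S⟩e ≥ (min_{i,j} (⟨M_i⟩e)_j) · e > 0 componentwise. -/
open Matrix

/-- The comparison matrix `⟨A⟩`. -/
def cmpMat {n : ℕ} (A : Matrix (Fin n) (Fin n) ℝ) : Matrix (Fin n) (Fin n) ℝ :=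
  fun s t => if s = t then |A s s| else -|A s t|

lemma cmp_row {n : ℕ} (A : Matrix (Fin n) (Fin n) ℝ) (s : Fin n) :
    (cmpMat A *ᵥ fun _ => (1:ℝ)) s = |A s s| - ∑ t ∈ Finset.univ.erase s, |A s t| := by
  simp only [mulVec, dotProduct, mul_one, cmpMat]
  rw [← Finset.add_sum_erase _ _ (Finset.mem_univ s)]
  rw [if_pos rfl, sub_eq_add_neg, ← Finset.sum_neg_distrib]
  congr 1
  exact Finset.sum_congr rfl fun t ht => by
    rw [if_neg (Finset.ne_of_mem_erase ht).symm]

theorem stmt_7 (n k : ℕ) (hn : 0 < n) (M : Fin (k+1) → Matrix (Fin n) (Fin n) ℝ)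
    (hsdd : ∀ i, SDD (M i))
    (hsign : ∀ s, (∀ i, 0 < M i s s) ∨ (∀ i, M i s s < 0))
    (d : Fin (k+1) → Fin n → ℝ)
    (hd : ∀ i s, d i s ∈ Set.Icc (0:ℝ) 1) (hsum : ∀ s, ∑ i, d i s = 1) :
    haveI : Nonempty (Fin n) := Fin.pos_iff_nonempty.mp hn
    0 < (⨅ p : Fin (k+1) × Fin n, (cmpMat (M p.1) *ᵥ fun _ => (1:ℝ)) p.2) ∧
      ∀ s, (⨅ p : Fin (k+1) × Fin n, (cmpMat (M p.1) *ᵥ fun _ => (1:ℝ)) p.2) ≤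
        (cmpMat (∑ i, Matrix.diagonal (d i) * M i) *ᵥ fun _ => (1:ℝ)) s := by
  haveI : Nonempty (Fin n) := Fin.pos_iff_nonempty.mp hn
  set f : Fin (k+1) × Fin n → ℝ := fun p => (cmpMat (M p.1) *ᵥ fun _ => (1:ℝ)) p.2 with hf
  have hfpos : ∀ p, 0 < f p := by
    rintro ⟨i, s⟩
    show 0 < (cmpMat (M i) *ᵥ fun _ => (1:ℝ)) s
    rw [cmp_row]
    exact sub_pos.2 (hsdd i s)
  have hbdd : BddBelow (Set.range f) := (Set.finite_range f).bddBelow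
  have hcle : ∀ p, (⨅ p, f p) ≤ f p := fun p => ciInf_le hbdd p
  obtain ⟨p0, hp0⟩ := Finite.exists_min f
  have hceq : (⨅ p, f p) = f p0 := le_antisymm (hcle p0) (le_ciInf hp0)
  constructor
  · rw [hceq]; exact hfpos p0
  · intro s
    set S := ∑ i, Matrix.diagonal (d i) * M i with hS
    have hSst : ∀ t, S s t = ∑ i, d i s * M i s t := by
      intro t
      simp [hS, Matrix.sum_apply, Matrix.diagonal_mul]
    have hd0 : ∀ i, 0 ≤ d i s := fun i => (hd i s).1
    -- |S s s| = ∑ i, d i s * |M i s s|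
    have hdiag : |S s s| = ∑ i, d i s * |M i s s| := by
      rw [hSst]
      rcases hsign s with h | h
      · rw [abs_of_nonneg (Finset.sum_nonneg fun i _ =>
          mul_nonneg (hd0 i) (h i).le)]
        exact Finset.sum_congr rfl fun i _ => by rw [abs_of_pos (h i)]
      · rw [abs_of_nonpos (Finset.sum_nonpos fun i _ =>
          mul_nonpos_of_nonneg_of_nonpos (hd0 i) (h i).le), ← Finset.sum_neg_distrib]
        exact Finset.sum_congr rfl fun i _ => by
          rw [abs_of_neg (h i)]; ring
    have hoff : ∀ t, |S s t| ≤ ∑ i, d i s * |M i s t| := by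
      intro t
      rw [hSst]
      refine (Finset.abs_sum_le_sum_abs _ _).trans ?_
      exact le_of_eq (Finset.sum_congr rfl fun i _ => by
        rw [abs_mul, abs_of_nonneg (hd0 i)])
    have key : ∑ i, d i s * f (i, s) ≤ (cmpMat S *ᵥ fun _ => (1:ℝ)) s := by
      rw [cmp_row]
      have h1 : ∑ t ∈ Finset.univ.erase s, |S s t| ≤
          ∑ t ∈ Finset.univ.erase s, ∑ i, d i s * |M i s t| :=
        Finset.sum_le_sum fun t _ => hoff t
      have h2 : ∑ i, d i s * f (i, s) =
          ∑ i, d i s * |M i s s| - ∑ t ∈ Finset.univ.erase s, ∑ i, d i s * |M i s t| := by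
        rw [Finset.sum_comm, ← Finset.sum_sub_distrib]
        refine Finset.sum_congr rfl fun i _ => ?_
        show d i s * (cmpMat (M i) *ᵥ fun _ => (1:ℝ)) s = _
        simp only [cmp_row, ← Finset.mul_sum]
        ring
      rw [h2, hdiag]
      linarith
    refine le_trans ?_ key
    calc (⨅ p, f p) = ∑ i, d i s * (⨅ p, f p) := by
          rw [← Finset.sum_mul, hsum, one_mul]
      _ ≤ ∑ i, d i s * f (i, s) :=
          Finset.sum_le_sum fun i _ => mul_le_mul_of_nonneg_left (hcle (i, s)) (hd0 i)
end

section
/- Let A be an n×n strictly diagonally dominant matrix with ⟨A⟩e > 0, and let D = diag(d_1,...,d_n) with d_j ∈ [0,1]. Then the infinity-norm bound ‖A^{-1} D‖_∞ ≤ max_j ( d_j / (⟨A⟩e)_j ) holds. -/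
open Matrix
open scoped NNReal

attribute [local instance] Matrix.linftyOpNormedRing

theorem stmt_8 (n : ℕ) (A : Matrix (Fin n) (Fin n) ℝ)
    (hsdd : SDD A) (hA : ∀ j, 0 < (cmpMat A *ᵥ fun _ => (1:ℝ)) j)
    (d : Fin n → ℝ) (hd : ∀ j, d j ∈ Set.Icc (0:ℝ) 1) :
    ‖A⁻¹ * Matrix.diagonal d‖ ≤ ⨆ j, d j / (cmpMat A *ᵥ fun _ => (1:ℝ)) j := by
  set β : Fin n → ℝ := fun j => (cmpMat A *ᵥ fun _ => (1:ℝ)) j with hβ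
  set c : ℝ := ⨆ j, d j / β j with hc
  have hc0 : 0 ≤ c := Real.iSup_nonneg fun j => div_nonneg (hd j).1 (hA j).le
  by_cases hdet : IsUnit A.det
  swap
  · rw [Matrix.nonsing_inv_apply_not_isUnit A hdet, Matrix.zero_mul, norm_zero]
    exact hc0
  set M := A⁻¹ * Matrix.diagonal d with hM
  have key : ∀ i : Fin n, ((∑ j, ‖M i j‖₊ : ℝ≥0) : ℝ) ≤ c := by
    intro i
    set x : Fin n → ℝ := fun j => if 0 ≤ M i j then 1 else -1 with hx
    have hx1 : ∀ j, |x j| ≤ 1 := by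
      intro j; simp only [hx]; split <;> simp
    set y : Fin n → ℝ := M *ᵥ x with hy
    have hyi : y i = ∑ j, |M i j| := by
      simp only [hy, Matrix.mulVec, dotProduct, hx]
      refine Finset.sum_congr rfl fun j _ => ?_
      split
      · rw [mul_one, abs_of_nonneg ‹_›]
      · rw [mul_neg_one, abs_of_neg (lt_of_not_ge ‹_›)]
    -- argmax
    obtain ⟨k, -, hk⟩ := Finset.exists_max_image Finset.univ (fun t => |y t|)
      ⟨i, Finset.mem_univ i⟩
    have hk' : ∀ t, |y t| ≤ |y k| := fun t => hk t (Finset.mem_univ t)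
    -- A *ᵥ y = d * x
    have hAy : A *ᵥ y = fun j => d j * x j := by
      rw [hy, Matrix.mulVec_mulVec, hM, ← Matrix.mul_assoc, Matrix.mul_nonsing_inv A hdet,
        Matrix.one_mul]
      funext j
      simp [Matrix.mulVec, dotProduct, Matrix.diagonal]
    have hβk : β k = |A k k| - ∑ t ∈ Finset.univ.erase k, |A k t| := by
      have h1 : (∑ t, cmpMat A k t) = cmpMat A k k + ∑ t ∈ Finset.univ.erase k, cmpMat A k t :=
        (Finset.add_sum_erase Finset.univ (fun t => cmpMat A k t) (Finset.mem_univ k)).symm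
      simp only [hβ, Matrix.mulVec, dotProduct, mul_one]
      rw [h1]
      have h2 : ∑ t ∈ Finset.univ.erase k, cmpMat A k t
          = ∑ t ∈ Finset.univ.erase k, -|A k t| := by
        refine Finset.sum_congr rfl fun t ht => ?_
        rw [cmpMat, if_neg (Ne.symm (Finset.ne_of_mem_erase ht))]
      rw [h2, cmpMat, if_pos rfl, Finset.sum_neg_distrib]
      ring
    -- main estimate at k
    have hsplit : A k k * y k = (A *ᵥ y) k - ∑ t ∈ Finset.univ.erase k, A k t * y t := by
      have : (A *ᵥ y) k = A k k * y k + ∑ t ∈ Finset.univ.erase k, A k t * y t := by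
        simp only [Matrix.mulVec, dotProduct]
        exact (Finset.add_sum_erase Finset.univ (fun t => A k t * y t) (Finset.mem_univ k)).symm
      rw [this]; ring
    have hAyk : |(A *ᵥ y) k| ≤ d k := by
      rw [hAy]
      calc |d k * x k| = d k * |x k| := by
            rw [abs_mul, abs_of_nonneg (hd k).1]
        _ ≤ d k * 1 := by
            exact mul_le_mul_of_nonneg_left (hx1 k) (hd k).1
        _ = d k := mul_one _
    have hest : |A k k| * |y k| ≤ d k + (∑ t ∈ Finset.univ.erase k, |A k t|) * |y k| := by
      rw [← abs_mul, hsplit]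
      calc |(A *ᵥ y) k - ∑ t ∈ Finset.univ.erase k, A k t * y t|
          ≤ |(A *ᵥ y) k| + |∑ t ∈ Finset.univ.erase k, A k t * y t| := abs_sub _ _
        _ ≤ d k + (∑ t ∈ Finset.univ.erase k, |A k t|) * |y k| := by
            refine add_le_add hAyk ?_
            calc |∑ t ∈ Finset.univ.erase k, A k t * y t|
                ≤ ∑ t ∈ Finset.univ.erase k, |A k t * y t| :=
                  Finset.abs_sum_le_sum_abs _ _
              _ ≤ ∑ t ∈ Finset.univ.erase k, |A k t| * |y k| := by
                  refine Finset.sum_le_sum fun t _ => ?_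
                  rw [abs_mul]
                  exact mul_le_mul_of_nonneg_left (hk' t) (abs_nonneg _)
              _ = (∑ t ∈ Finset.univ.erase k, |A k t|) * |y k| := by
                  rw [Finset.sum_mul]
    have hyk : |y k| ≤ d k / β k := by
      rw [le_div_iff₀ (hA k)]
      have : β k * |y k| ≤ d k := by
        rw [hβk, sub_mul]
        linarith [hest]
      linarith [this]
    have hdc : d k / β k ≤ c := le_ciSup (f := fun j => d j / β j) (Set.Finite.bddAbove (Set.finite_range _)) k
    have hcoe : ((∑ j, ‖M i j‖₊ : ℝ≥0) : ℝ) = ∑ j, |M i j| := by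
      push_cast
      simp [Real.norm_eq_abs]
    rw [hcoe, ← hyi]
    calc y i ≤ |y i| := le_abs_self _
      _ ≤ |y k| := hk' i
      _ ≤ d k / β k := hyk
      _ ≤ c := hdc
  rw [Matrix.linfty_opNorm_def, ← Real.coe_toNNReal c hc0, NNReal.coe_le_coe]
  refine Finset.sup_le fun i _ => ?_
  rw [← NNReal.coe_le_coe, Real.coe_toNNReal c hc0]
  exact key i
end

section
/- Let M_0, ..., M_k be n×n strictly diagonally dominant matrices whose s-th diagonal entries share the same sign for each s. Then for every tuple (D_0,...,D_k) of nonnegative diagonal matrices with entries in [0,1] summing to I, and for each ℓ ∈ {0,...,k}, ‖(Σ_{i=0}^k D_i M_i)^{-1} D_ℓ‖_∞ ≤ 1 / min_{j} (⟨M_ℓ⟩ e)_j. -/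
open Matrix

attribute [local instance] Matrix.linftyOpNormedRing

lemma sign_abs_helper (a : ℝ) : a * Real.sign a = |a| := by
  rcases lt_trichotomy a 0 with h | h | h
  · rw [Real.sign_of_neg h, abs_of_neg h]; ring
  · simp [h]
  · rw [Real.sign_of_pos h, abs_of_pos h]; ring

lemma abs_sign_le_one (a : ℝ) : |Real.sign a| ≤ 1 := by
  rcases lt_trichotomy a 0 with h | h | h
  · rw [Real.sign_of_neg h]; norm_num
  · simp [h]
  · rw [Real.sign_of_pos h]; norm_num

theorem stmt_9 (n k : ℕ) (M : Fin (k+1) → Matrix (Fin n) (Fin n) ℝ)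
    (hsdd : ∀ i, SDD (M i))
    (hsign : ∀ s, (∀ i, 0 < M i s s) ∨ (∀ i, M i s s < 0))
    (d : Fin (k+1) → Fin n → ℝ)
    (hd : ∀ i s, d i s ∈ Set.Icc (0:ℝ) 1) (hsum : ∀ s, ∑ i, d i s = 1)
    (ℓ : Fin (k+1)) :
    ‖(∑ i, Matrix.diagonal (d i) * M i)⁻¹ * Matrix.diagonal (d ℓ)‖ ≤
      1 / ⨅ j, (cmpMat (M ℓ) *ᵥ fun _ => (1:ℝ)) j := by
  rcases Nat.eq_zero_or_pos n with hn | hn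
  · subst hn
    have h1 : ‖(∑ i, Matrix.diagonal (d i) * M i)⁻¹ * Matrix.diagonal (d ℓ)‖ = 0 := by
      rw [Matrix.linfty_opNorm_def]; simp
    rw [h1, iInf_of_isEmpty, Real.sInf_empty]
    simp
  haveI : Nonempty (Fin n) := Fin.pos_iff_nonempty.mp hn
  set A := ∑ i, Matrix.diagonal (d i) * M i with hA
  set r := ⨅ j, (cmpMat (M ℓ) *ᵥ fun _ => (1:ℝ)) j with hr
  have hAentry : ∀ s t, A s t = ∑ i, d i s * M i s t := by
    intro s t
    rw [hA]
    simp [Matrix.sum_apply, Matrix.diagonal_mul]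
  set c : Fin (k+1) → Fin n → ℝ :=
    fun i s => |M i s s| - ∑ t ∈ Finset.univ.erase s, |M i s t| with hcdef
  have hcpos : ∀ i s, 0 < c i s := fun i s => sub_pos.mpr (hsdd i s)
  have hcmp : ∀ i s, (cmpMat (M i) *ᵥ fun _ => (1:ℝ)) s = c i s := by
    intro i s
    simp only [Matrix.mulVec, dotProduct, mul_one]
    rw [← Finset.add_sum_erase _ _ (Finset.mem_univ s)]
    have h2 : ∑ t ∈ Finset.univ.erase s, cmpMat (M i) s t
        = ∑ t ∈ Finset.univ.erase s, -|M i s t| := by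
      refine Finset.sum_congr rfl fun t ht => ?_
      have : s ≠ t := fun h => (Finset.mem_erase.mp ht).1 h.symm
      simp [cmpMat, this]
    rw [h2, Finset.sum_neg_distrib]
    simp [cmpMat, hcdef]
    ring
  have hrle : ∀ j, r ≤ c ℓ j := by
    intro j
    rw [← hcmp ℓ j]
    exact ciInf_le (Finite.bddBelow_range _) j
  have hrpos : 0 < r := by
    obtain ⟨j0, hj0⟩ := Finite.exists_min fun j => (cmpMat (M ℓ) *ᵥ fun _ => (1:ℝ)) j
    have h1 : (cmpMat (M ℓ) *ᵥ fun _ => (1:ℝ)) j0 ≤ r := le_ciInf hj0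
    calc (0:ℝ) < c ℓ j0 := hcpos ℓ j0
      _ = _ := (hcmp ℓ j0).symm
      _ ≤ r := h1
  -- row dominance estimates
  have hAss : ∀ s, |A s s| = ∑ i, d i s * |M i s s| := by
    intro s
    rw [hAentry]
    rcases hsign s with hp | hneg
    · rw [abs_of_nonneg (Finset.sum_nonneg fun i _ =>
        mul_nonneg (hd i s).1 (hp i).le)]
      exact Finset.sum_congr rfl fun i _ => by rw [abs_of_pos (hp i)]
    · rw [abs_of_nonpos (Finset.sum_nonpos fun i _ =>
        mul_nonpos_of_nonneg_of_nonpos (hd i s).1 (hneg i).le),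
        ← Finset.sum_neg_distrib]
      exact Finset.sum_congr rfl fun i _ => by rw [abs_of_neg (hneg i)]; ring
  have hAst : ∀ s t, |A s t| ≤ ∑ i, d i s * |M i s t| := by
    intro s t
    rw [hAentry]
    refine (Finset.abs_sum_le_sum_abs _ _).trans_eq ?_
    exact Finset.sum_congr rfl fun i _ => by
      rw [abs_mul, abs_of_nonneg (hd i s).1]
  have hdom : ∀ s, ∑ i, d i s * c i s ≤ |A s s| - ∑ t ∈ Finset.univ.erase s, |A s t| := by
    intro s
    have h1 : ∑ i, d i s * c i s
        = ∑ i, d i s * |M i s s| - ∑ i, d i s * ∑ t ∈ Finset.univ.erase s, |M i s t| := by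
      rw [← Finset.sum_sub_distrib]
      exact Finset.sum_congr rfl fun i _ => by rw [hcdef]; ring
    rw [h1, ← hAss s]
    have h2 : ∑ t ∈ Finset.univ.erase s, |A s t|
        ≤ ∑ i, d i s * ∑ t ∈ Finset.univ.erase s, |M i s t| := by
      calc ∑ t ∈ Finset.univ.erase s, |A s t|
          ≤ ∑ t ∈ Finset.univ.erase s, ∑ i, d i s * |M i s t| :=
            Finset.sum_le_sum fun t _ => hAst s t
        _ = ∑ i, d i s * ∑ t ∈ Finset.univ.erase s, |M i s t| := by
            rw [Finset.sum_comm]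
            exact Finset.sum_congr rfl fun i _ => by rw [Finset.mul_sum]
    linarith
  have hpossum : ∀ s, 0 < ∑ i, d i s * c i s := by
    intro s
    have h1 : ∃ i, 0 < d i s := by
      by_contra h
      push_neg at h
      have : ∑ i, d i s = 0 := Finset.sum_eq_zero fun i _ =>
        le_antisymm (h i) (hd i s).1
      rw [hsum s] at this; norm_num at this
    obtain ⟨i0, hi0⟩ := h1
    exact Finset.sum_pos'
      (fun i _ => mul_nonneg (hd i s).1 (hcpos i s).le)
      ⟨i0, Finset.mem_univ i0, mul_pos hi0 (hcpos i0 s)⟩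
  have hSDDA : ∀ s, ∑ t ∈ Finset.univ.erase s, |A s t| < |A s s| := by
    intro s
    have := hdom s
    have := hpossum s
    linarith
  have hdet : A.det ≠ 0 := by
    apply det_ne_zero_of_sum_row_lt_diag
    simpa [Real.norm_eq_abs] using hSDDA
  have hAinv : A * A⁻¹ = 1 := Matrix.mul_nonsing_inv A (isUnit_iff_ne_zero.mpr hdet)
  set B := A⁻¹ * Matrix.diagonal (d ℓ) with hB
  have key : ∀ x : Fin n → ℝ, (∀ t, |x t| ≤ 1) → ∀ s, |(B *ᵥ x) s| ≤ 1 / r := by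
    intro x hx
    set y := B *ᵥ x with hy
    have hAy : A *ᵥ y = fun t => d ℓ t * x t := by
      rw [hy, hB, Matrix.mulVec_mulVec, ← Matrix.mul_assoc, hAinv, Matrix.one_mul]
      funext t
      simp [Matrix.mulVec, dotProduct, Matrix.diagonal, Finset.sum_ite_eq]
    obtain ⟨s0, hs0⟩ := Finite.exists_max fun s => |y s|
    suffices hbound : |y s0| ≤ 1 / r by intro s; exact (hs0 s).trans hbound
    have heq : ∑ t, A s0 t * y t = d ℓ s0 * x s0 := by
      have := congrFun hAy s0
      simpa [Matrix.mulVec, dotProduct] using this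
    have heq2 : A s0 s0 * y s0 = d ℓ s0 * x s0 - ∑ t ∈ Finset.univ.erase s0, A s0 t * y t := by
      rw [← heq, ← Finset.add_sum_erase _ _ (Finset.mem_univ s0)]; ring
    have h4 : |A s0 s0| * |y s0|
        ≤ d ℓ s0 + (∑ t ∈ Finset.univ.erase s0, |A s0 t|) * |y s0| := by
      rw [← abs_mul, heq2]
      calc |d ℓ s0 * x s0 - ∑ t ∈ Finset.univ.erase s0, A s0 t * y t|
          ≤ |d ℓ s0 * x s0| + |∑ t ∈ Finset.univ.erase s0, A s0 t * y t| :=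
            abs_sub _ _
        _ ≤ d ℓ s0 + (∑ t ∈ Finset.univ.erase s0, |A s0 t|) * |y s0| := by
            refine add_le_add ?_ ?_
            · rw [abs_mul, abs_of_nonneg (hd ℓ s0).1]
              calc d ℓ s0 * |x s0| ≤ d ℓ s0 * 1 :=
                  mul_le_mul_of_nonneg_left (hx s0) (hd ℓ s0).1
                _ = d ℓ s0 := mul_one _
            · calc |∑ t ∈ Finset.univ.erase s0, A s0 t * y t|
                  ≤ ∑ t ∈ Finset.univ.erase s0, |A s0 t * y t| :=
                    Finset.abs_sum_le_sum_abs _ _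
                _ ≤ ∑ t ∈ Finset.univ.erase s0, |A s0 t| * |y s0| :=
                    Finset.sum_le_sum fun t _ => by
                      rw [abs_mul]
                      exact mul_le_mul_of_nonneg_left (hs0 t) (abs_nonneg _)
                _ = (∑ t ∈ Finset.univ.erase s0, |A s0 t|) * |y s0| := by
                    rw [Finset.sum_mul]
    have h5 : (∑ i, d i s0 * c i s0) * |y s0| ≤ d ℓ s0 := by
      have h51 : (|A s0 s0| - ∑ t ∈ Finset.univ.erase s0, |A s0 t|) * |y s0| ≤ d ℓ s0 := by
        rw [sub_mul]; linarith
      have h52 := mul_le_mul_of_nonneg_right (hdom s0) (abs_nonneg (y s0))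
      linarith
    rcases eq_or_lt_of_le (hd ℓ s0).1 with h0 | h0
    · have hyle : |y s0| ≤ 0 := by
        nlinarith [hpossum s0, abs_nonneg (y s0)]
      calc |y s0| ≤ 0 := hyle
        _ ≤ 1 / r := by positivity
    · have h6 : d ℓ s0 * c ℓ s0 ≤ ∑ i, d i s0 * c i s0 :=
        Finset.single_le_sum
          (fun i _ => mul_nonneg (hd i s0).1 (hcpos i s0).le) (Finset.mem_univ ℓ)
      have h7 : d ℓ s0 * (c ℓ s0 * |y s0|) ≤ d ℓ s0 * 1 := by
        nlinarith [abs_nonneg (y s0)]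
      have h8 : c ℓ s0 * |y s0| ≤ 1 := le_of_mul_le_mul_left h7 h0
      rw [le_div_iff₀ hrpos]
      calc |y s0| * r ≤ |y s0| * c ℓ s0 :=
          mul_le_mul_of_nonneg_left (hrle s0) (abs_nonneg _)
        _ ≤ 1 := by linarith [h8]
  -- row sums of B
  have hfin : ∀ s, ∑ t, |B s t| ≤ 1 / r := by
    intro s
    set x : Fin n → ℝ := fun t => Real.sign (B s t) with hx
    have hx1 : ∀ t, |x t| ≤ 1 := fun t => abs_sign_le_one _
    have hxy : (B *ᵥ x) s = ∑ t, |B s t| := by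
      simp only [Matrix.mulVec, dotProduct, hx]
      exact Finset.sum_congr rfl fun t _ => sign_abs_helper _
    calc ∑ t, |B s t| = (B *ᵥ x) s := hxy.symm
      _ ≤ |(B *ᵥ x) s| := le_abs_self _
      _ ≤ 1 / r := key x hx1 s
  have hr1 : (0:ℝ) ≤ 1 / r := by positivity
  rw [Matrix.linfty_opNorm_def]
  have hsup : (Finset.univ.sup fun s => ∑ t, ‖B s t‖₊) ≤ (1 / r).toNNReal := by
    refine Finset.sup_le fun s _ => ?_
    rw [← NNReal.coe_le_coe, NNReal.coe_sum, Real.coe_toNNReal _ hr1]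
    simpa [Real.norm_eq_abs] using hfin s
  calc ((Finset.univ.sup fun s => ∑ t, ‖B s t‖₊ : NNReal) : ℝ)
      ≤ ((1 / r).toNNReal : ℝ) := NNReal.coe_le_coe.2 hsup
    _ = 1 / r := Real.coe_toNNReal _ hr1
end

section
/- Let M_0,...,M_k be n×n matrices such that D_0 M_0 + ... + D_k M_k is nonsingular for all nonnegative diagonal D_i with entries in [0,1] and Σ D_i = I (row W-property), and let α_i := max over such tuples of ‖(Σ_j D_j M_j)^{-1} D_i‖. If A_0,...,A_k are n×n matrices with Σ_{i=0}^k α_i ‖A_i − M_i‖ ≤ η < 1, then D_0 A_0 + ... + D_k A_k is nonsingular for all tuples (D_0,...,D_k) as above; i.e., (A_0,...,A_k) also has the row W-property. -/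
open Matrix

attribute [local instance] Matrix.linftyOpNormedRing

theorem stmt_11 (n k : ℕ) (M : Fin (k+1) → Matrix (Fin n) (Fin n) ℝ)
    (hW : ∀ d : Fin (k+1) → Fin n → ℝ,
      (∀ i s, d i s ∈ Set.Icc (0:ℝ) 1) → (∀ s, ∑ i, d i s = 1) →
      IsUnit (∑ i, Matrix.diagonal (d i) * M i))
    (α : Fin (k+1) → ℝ)
    (hα : ∀ i, IsGreatest {r : ℝ | ∃ d : Fin (k+1) → Fin n → ℝ,
      (∀ i' s, d i' s ∈ Set.Icc (0:ℝ) 1) ∧ (∀ s, ∑ i', d i' s = 1) ∧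
      r = ‖(∑ i', Matrix.diagonal (d i') * M i')⁻¹ * Matrix.diagonal (d i)‖} (α i))
    (A : Fin (k+1) → Matrix (Fin n) (Fin n) ℝ) (η : ℝ)
    (hA : ∑ i, α i * ‖A i - M i‖ ≤ η) (hη : η < 1) :
    ∀ d : Fin (k+1) → Fin n → ℝ,
      (∀ i s, d i s ∈ Set.Icc (0:ℝ) 1) → (∀ s, ∑ i, d i s = 1) →
      IsUnit (∑ i, Matrix.diagonal (d i) * A i) := by
  intro d hd hsum
  set S := ∑ i, Matrix.diagonal (d i) * M i with hS
  have hSu : IsUnit S := hW d hd hsum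
  have hSdet : IsUnit S.det := (Matrix.isUnit_iff_isUnit_det S).mp hSu
  set T := ∑ i, Matrix.diagonal (d i) * (A i - M i) with hT
  have hbound : ‖S⁻¹ * T‖ < 1 := by
    have h1 : S⁻¹ * T = ∑ i, (S⁻¹ * Matrix.diagonal (d i)) * (A i - M i) := by
      rw [hT, Finset.mul_sum]
      exact Finset.sum_congr rfl fun i _ => (mul_assoc _ _ _).symm
    have h2 : ‖S⁻¹ * T‖ ≤ ∑ i, ‖S⁻¹ * Matrix.diagonal (d i)‖ * ‖A i - M i‖ := by
      rw [h1]
      exact (norm_sum_le _ _).trans (Finset.sum_le_sum fun i _ => norm_mul_le _ _)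
    have h3 : ∀ i, ‖S⁻¹ * Matrix.diagonal (d i)‖ ≤ α i := fun i =>
      (hα i).2 ⟨d, hd, hsum, rfl⟩
    have h4 : ∑ i, ‖S⁻¹ * Matrix.diagonal (d i)‖ * ‖A i - M i‖ ≤ ∑ i, α i * ‖A i - M i‖ :=
      Finset.sum_le_sum fun i _ => mul_le_mul_of_nonneg_right (h3 i) (norm_nonneg _)
    linarith
  have hunit : IsUnit (1 + S⁻¹ * T) := by
    letI := (Matrix.linftyOpNormedAlgebra : NormedAlgebra ℝ (Matrix (Fin n) (Fin n) ℝ))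
    haveI : CompleteSpace (Matrix (Fin n) (Fin n) ℝ) := FiniteDimensional.complete ℝ _
    refine ⟨Units.oneSub (-(S⁻¹ * T)) (by simpa using hbound), ?_⟩
    rw [Units.val_oneSub, sub_neg_eq_add]
  have hkey : (∑ i, Matrix.diagonal (d i) * A i) = S * (1 + S⁻¹ * T) := by
    rw [mul_add, mul_one, ← mul_assoc, Matrix.mul_nonsing_inv S hSdet, one_mul, hS, hT,
      ← Finset.sum_add_distrib]
    exact Finset.sum_congr rfl fun i _ => by rw [← mul_add]; congr 1; abel
  rw [hkey]
  exact hSu.mul hunit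
end

section
/- Let M_0,...,M_k have the row W-property with constants α_i := max over tuples (D_0,...,D_k) ∈ D of ‖(Σ_j D_j M_j)^{-1} D_i‖, and let x* and y* be the unique solutions of min_{0≤i≤k}(M_i x + q_i) = 0 and min_{0≤i≤k}(M_i y + q̃_i) = 0 respectively. Then ‖x* − y*‖ ≤ Σ_{i=0}^k α_i ‖q̃_i − q_i‖. -/
open Matrix

attribute [local instance] Matrix.linftyOpNormedRing

lemma my_sum_mulVec {ι : Type*} (s : Finset ι) {n : ℕ} (A : ι → Matrix (Fin n) (Fin n) ℝ)
    (v : Fin n → ℝ) : (∑ i ∈ s, A i) *ᵥ v = ∑ i ∈ s, A i *ᵥ v := by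
  classical
  induction s using Finset.cons_induction with
  | empty => simp [Matrix.zero_mulVec]
  | cons a s ha ih => rw [Finset.sum_cons, Finset.sum_cons, Matrix.add_mulVec, ih]

lemma my_mulVec_sum {ι : Type*} (s : Finset ι) {n : ℕ} (A : Matrix (Fin n) (Fin n) ℝ)
    (v : ι → Fin n → ℝ) : A *ᵥ (∑ i ∈ s, v i) = ∑ i ∈ s, A *ᵥ v i := by
  simpa only [Matrix.mulVecLin_apply] using map_sum A.mulVecLin v s

lemma convex_weights {m : ℕ} (v : Fin (m+1) → ℝ) (c : ℝ)
    (h1 : ∃ j, v j ≤ c) (h2 : ∃ j, c ≤ v j) :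
    ∃ d : Fin (m+1) → ℝ, (∀ i, d i ∈ Set.Icc (0:ℝ) 1) ∧ ∑ i, d i = 1 ∧
      ∑ i, d i * v i = c := by
  obtain ⟨j1, hj1⟩ := h1
  obtain ⟨j2, hj2⟩ := h2
  by_cases hlt : v j1 < v j2
  · set t : ℝ := (v j2 - c) / (v j2 - v j1) with ht
    have hden : (0:ℝ) < v j2 - v j1 := by linarith
    have ht0 : 0 ≤ t := div_nonneg (by linarith) hden.le
    have ht1 : t ≤ 1 := by rw [div_le_one hden]; linarith
    have hne : j2 ≠ j1 := fun h => absurd (congrArg v h) (by intro hh; rw [hh] at hlt; exact lt_irrefl _ hlt)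
    refine ⟨fun i => if i = j1 then t else if i = j2 then 1 - t else 0, ?_, ?_, ?_⟩
    · intro i
      by_cases e1 : i = j1
      · simp [e1]; exact ⟨ht0, ht1⟩
      · by_cases e2 : i = j2
        · simp [e1, e2, hne]; constructor <;> linarith
        · simp [e1, e2]
    · show ∑ i, (if i = j1 then t else if i = j2 then 1 - t else 0) = 1
      have : ∀ i, (if i = j1 then t else if i = j2 then 1 - t else 0)
          = (if i = j1 then t else 0) + (if i = j2 then 1 - t else 0) := by
        intro i
        by_cases e1 : i = j1
        · subst e1; simp [Ne.symm hne]
        · by_cases e2 : i = j2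
          · subst e2; simp [e1, hne]
          · simp [e1, e2]
      rw [Finset.sum_congr rfl fun i _ => this i, Finset.sum_add_distrib,
        Finset.sum_ite_eq' Finset.univ j1, Finset.sum_ite_eq' Finset.univ j2]
      simp
    · show ∑ i, (if i = j1 then t else if i = j2 then 1 - t else 0) * v i = c
      have : ∀ i, (if i = j1 then t else if i = j2 then 1 - t else 0) * v i
          = (if i = j1 then t * v j1 else 0) + (if i = j2 then (1-t) * v j2 else 0) := by
        intro i
        by_cases e1 : i = j1
        · subst e1; simp [Ne.symm hne]
        · by_cases e2 : i = j2
          · subst e2; simp [e1, hne]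
          · simp [e1, e2]
      rw [Finset.sum_congr rfl fun i _ => this i, Finset.sum_add_distrib,
        Finset.sum_ite_eq' Finset.univ j1, Finset.sum_ite_eq' Finset.univ j2]
      simp only [Finset.mem_univ, if_true]
      rw [ht]
      field_simp
      ring
  · have heq : v j1 = c := le_antisymm hj1 (by push_neg at hlt; linarith)
    refine ⟨fun i => if i = j1 then 1 else 0, ?_, ?_, ?_⟩
    · intro i
      by_cases h : i = j1 <;> simp [h]
    · show ∑ i, (if i = j1 then (1:ℝ) else 0) = 1
      simp [Finset.sum_ite_eq' Finset.univ j1]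
    · show ∑ i, (if i = j1 then (1:ℝ) else 0) * v i = c
      have : ∀ i, (if i = j1 then (1:ℝ) else 0) * v i = if i = j1 then v j1 else 0 := by
        intro i; by_cases h : i = j1 <;> simp [h]
      rw [Finset.sum_congr rfl fun i _ => this i, Finset.sum_ite_eq' Finset.univ j1]
      simp [heq]

theorem stmt_12 (n k : ℕ) (M : Fin (k+1) → Matrix (Fin n) (Fin n) ℝ)
    (hW : ∀ d : Fin (k+1) → Fin n → ℝ,
      (∀ i s, d i s ∈ Set.Icc (0:ℝ) 1) → (∀ s, ∑ i, d i s = 1) →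
      IsUnit (∑ i, Matrix.diagonal (d i) * M i))
    (α : Fin (k+1) → ℝ)
    (hα : ∀ i, IsGreatest {r : ℝ | ∃ d : Fin (k+1) → Fin n → ℝ,
      (∀ i' s, d i' s ∈ Set.Icc (0:ℝ) 1) ∧ (∀ s, ∑ i', d i' s = 1) ∧
      r = ‖(∑ i', Matrix.diagonal (d i') * M i')⁻¹ * Matrix.diagonal (d i)‖} (α i))
    (q q' : Fin (k+1) → Fin n → ℝ) (x y : Fin n → ℝ)
    (hx : ∀ s, (⨅ i, (M i *ᵥ x + q i) s) = 0)
    (hy : ∀ s, (⨅ i, (M i *ᵥ y + q' i) s) = 0) :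
    ‖x - y‖ ≤ ∑ i, α i * ‖q' i - q i‖ := by
  have key : ∀ s : Fin n, ∃ d : Fin (k+1) → ℝ,
      (∀ i, d i ∈ Set.Icc (0:ℝ) 1) ∧ ∑ i, d i = 1 ∧
      ∑ i, d i * ((M i *ᵥ x + q i) s - (M i *ᵥ y + q' i) s) = 0 := by
    intro s
    set a : Fin (k+1) → ℝ := fun i => (M i *ᵥ x + q i) s with ha'
    set b : Fin (k+1) → ℝ := fun i => (M i *ᵥ y + q' i) s with hb'
    have ha0 : ∀ i, 0 ≤ a i := fun i => (hx s) ▸ ciInf_le (Finite.bddBelow_range _) i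
    have hb0 : ∀ i, 0 ≤ b i := fun i => (hy s) ▸ ciInf_le (Finite.bddBelow_range _) i
    obtain ⟨ja, hja⟩ := exists_eq_ciInf_of_finite (f := a)
    obtain ⟨jb, hjb⟩ := exists_eq_ciInf_of_finite (f := b)
    have haj : a ja = 0 := by rw [hja]; exact hx s
    have hbj : b jb = 0 := by rw [hjb]; exact hy s
    exact convex_weights (fun i => a i - b i) 0
      ⟨ja, by simp only [haj]; linarith [hb0 ja]⟩
      ⟨jb, by simp only [hbj]; linarith [ha0 jb]⟩
  choose dd hdd1 hdd2 hdd3 using key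
  set d : Fin (k+1) → Fin n → ℝ := fun i s => dd s i with hd
  have hdIcc : ∀ i s, d i s ∈ Set.Icc (0:ℝ) 1 := fun i s => hdd1 s i
  have hdsum : ∀ s, ∑ i, d i s = 1 := fun s => hdd2 s
  set A : Matrix (Fin n) (Fin n) ℝ := ∑ i, Matrix.diagonal (d i) * M i with hA
  have hAunit : IsUnit A := hW d hdIcc hdsum
  have hAdet : IsUnit A.det := (Matrix.isUnit_iff_isUnit_det A).mp hAunit
  have heq : A *ᵥ (x - y) = ∑ i, Matrix.diagonal (d i) *ᵥ (q' i - q i) := by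
    funext s
    rw [hA, my_sum_mulVec, Finset.sum_apply, Finset.sum_apply]
    have lhs : ∀ i, ((Matrix.diagonal (d i) * M i) *ᵥ (x - y)) s
        = d i s * ((M i *ᵥ x) s - (M i *ᵥ y) s) := by
      intro i
      rw [← Matrix.mulVec_mulVec, Matrix.mulVec_diagonal]
      congr 1
      rw [Matrix.mulVec_sub]
      simp
    have rhs : ∀ i, (Matrix.diagonal (d i) *ᵥ (q' i - q i)) s
        = d i s * (q' i s - q i s) := by
      intro i; rw [Matrix.mulVec_diagonal]; simp [Pi.sub_apply]
    rw [Finset.sum_congr rfl fun i _ => lhs i, Finset.sum_congr rfl fun i _ => rhs i]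
    have h3 := hdd3 s
    have expand : ∀ i, dd s i * ((M i *ᵥ x + q i) s - (M i *ᵥ y + q' i) s)
        = dd s i * ((M i *ᵥ x) s - (M i *ᵥ y) s) - dd s i * (q' i s - q i s) := by
      intro i; simp only [Pi.add_apply]; ring
    rw [Finset.sum_congr rfl fun i _ => expand i, Finset.sum_sub_distrib] at h3
    have hds : ∀ i, d i s = dd s i := fun i => rfl
    simp only [hds]
    linarith [h3]
  have hxy : x - y = ∑ i, (A⁻¹ * Matrix.diagonal (d i)) *ᵥ (q' i - q i) := by
    have h := congrArg (fun v => A⁻¹ *ᵥ v) heq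
    rw [Matrix.mulVec_mulVec, Matrix.nonsing_inv_mul A hAdet, Matrix.one_mulVec,
      my_mulVec_sum] at h
    rw [h]
    exact Finset.sum_congr rfl fun i _ => (Matrix.mulVec_mulVec _ _ _)
  rw [hxy]
  calc ‖∑ i, (A⁻¹ * Matrix.diagonal (d i)) *ᵥ (q' i - q i)‖
      ≤ ∑ i, ‖(A⁻¹ * Matrix.diagonal (d i)) *ᵥ (q' i - q i)‖ := norm_sum_le _ _
    _ ≤ ∑ i, α i * ‖q' i - q i‖ := by
        apply Finset.sum_le_sum
        intro i _
        calc ‖(A⁻¹ * Matrix.diagonal (d i)) *ᵥ (q' i - q i)‖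
            ≤ ‖A⁻¹ * Matrix.diagonal (d i)‖ * ‖q' i - q i‖ :=
              Matrix.linfty_opNorm_mulVec _ _
          _ ≤ α i * ‖q' i - q i‖ := by
              apply mul_le_mul_of_nonneg_right _ (norm_nonneg _)
              exact (hα i).2 ⟨d, hdIcc, hdsum, rfl⟩
end

section
/- Let M_0,...,M_k have the row W-property and let x* be the unique solution of the extended vertical linear complementarity problem min_{0≤i≤k}(M_i x + q_i) = 0. Then there exists a tuple (D̃_0,...,D̃_k) of nonnegative diagonal matrices with entries in [0,1] and Σ_i D̃_i = I such that x* = −(Σ_{i=0}^k D̃_i M_i)^{-1} Σ_{i=0}^k D̃_i q_i. -/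
open Matrix

theorem stmt_13 (n k : ℕ) (M : Fin (k+1) → Matrix (Fin n) (Fin n) ℝ)
    (hW : ∀ d : Fin (k+1) → Fin n → ℝ,
      (∀ i s, d i s ∈ Set.Icc (0:ℝ) 1) → (∀ s, ∑ i, d i s = 1) →
      IsUnit (∑ i, Matrix.diagonal (d i) * M i))
    (q : Fin (k+1) → Fin n → ℝ) (x : Fin n → ℝ)
    (hx : ∀ s, (⨅ i, (M i *ᵥ x + q i) s) = 0) :
    ∃ d : Fin (k+1) → Fin n → ℝ,
      (∀ i s, d i s ∈ Set.Icc (0:ℝ) 1) ∧ (∀ s, ∑ i, d i s = 1) ∧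
      x = -((∑ i, Matrix.diagonal (d i) * M i)⁻¹ *ᵥ ∑ i, Matrix.diagonal (d i) *ᵥ q i) := by
  -- For each row s pick an index attaining the minimum
  have hmin : ∀ s : Fin n, ∃ i, (M i *ᵥ x + q i) s = 0 := by
    intro s
    obtain ⟨i, hi⟩ := Finite.exists_min (fun i => (M i *ᵥ x + q i) s)
    refine ⟨i, ?_⟩
    have h1 : (⨅ j, (M j *ᵥ x + q j) s) ≤ (fun j => (M j *ᵥ x + q j) s) i :=
      ciInf_le (Set.Finite.bddBelow (Set.finite_range _)) i
    have h2 : (fun j => (M j *ᵥ x + q j) s) i ≤ ⨅ j, (M j *ᵥ x + q j) s :=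
      le_ciInf hi
    have := le_antisymm h2 h1
    rw [hx s] at this
    exact this
  choose i0 hi0 using hmin
  set d : Fin (k+1) → Fin n → ℝ := fun i s => if i = i0 s then 1 else 0 with hd
  have hIcc : ∀ i s, d i s ∈ Set.Icc (0:ℝ) 1 := by
    intro i s
    simp only [hd]
    split <;> norm_num
  have hsum : ∀ s, ∑ i, d i s = 1 := by
    intro s
    simp [hd]
  refine ⟨d, hIcc, hsum, ?_⟩
  set A := ∑ i, Matrix.diagonal (d i) * M i with hA
  set b := ∑ i, Matrix.diagonal (d i) *ᵥ q i with hb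
  have hAx : A *ᵥ x + b = 0 := by
    funext s
    have hsplit : (A *ᵥ x) s = ∑ i, ((diagonal (d i) * M i) *ᵥ x) s := by
      simp only [hA, Matrix.mulVec, dotProduct, Finset.sum_apply,
        Finset.sum_mul, Matrix.sum_apply]
      rw [Finset.sum_comm]
    have h0 := hi0 s
    simp only [Pi.add_apply] at h0
    have : (A *ᵥ x) s + b s = (M (i0 s) *ᵥ x) s + q (i0 s) s := by
      rw [hsplit]
      simp only [hb, Finset.sum_apply]
      rw [← Finset.sum_add_distrib]
      rw [Finset.sum_eq_single (i0 s)]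
      · simp [hd, Matrix.mulVec_mulVec, Matrix.mulVec, diagonal_dotProduct]
      · intro i _ hi
        simp [hd, Matrix.mulVec_mulVec, Matrix.mulVec, diagonal_dotProduct, hi]
      · simp
    simp only [Pi.add_apply, Pi.zero_apply]
    rw [this, h0]
  have hU : IsUnit A := hW d hIcc hsum
  have hinv : A⁻¹ * A = 1 :=
    Matrix.nonsing_inv_mul A ((Matrix.isUnit_iff_isUnit_det A).mp hU)
  have hxb : A *ᵥ x = -b := by
    have := hAx
    rw [add_eq_zero_iff_eq_neg] at this
    exact this
  calc x = (A⁻¹ * A) *ᵥ x := by rw [hinv, Matrix.one_mulVec]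
    _ = A⁻¹ *ᵥ (A *ᵥ x) := by rw [Matrix.mulVec_mulVec]
    _ = A⁻¹ *ᵥ (-b) := by rw [hxb]
    _ = -(A⁻¹ *ᵥ b) := by rw [Matrix.mulVec_neg]
end

section
/- Let M_0,...,M_k have positive diagonal entries, write M_i = Λ_i − C_i with Λ_i the diagonal part, and assume ρ(max_{0≤i≤k} Λ_i^{-1}|C_i|) < 1. Then for each ℓ and every tuple (D_0,...,D_k) of nonnegative diagonal matrices with entries in [0,1] summing to I, ‖(Σ_{i=0}^k D_i M_i)^{-1} D_ℓ‖ ≤ ‖(I − max_{0≤i≤k} Λ_i^{-1}|C_i|)^{-1} Λ_ℓ^{-1}‖, where the norm is any monotone matrix norm (e.g. the infinity norm). -/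
open Matrix

open Filter
open scoped ENNReal NNReal

attribute [local instance] Matrix.linftyOpNormedRing Matrix.linftyOpNormedAlgebra

namespace Stmt14Aux

variable {n : ℕ}

lemma entry_norm_le {R : Type*} [NormedRing R] (A : Matrix (Fin n) (Fin n) R) (s t : Fin n) :
    ‖A s t‖ ≤ ‖A‖ := by
  have h : ‖A s t‖₊ ≤ ‖A‖₊ := by
    rw [Matrix.linfty_opNNNorm_def]
    refine le_trans ?_ (Finset.le_sup (f := fun i => ∑ j, ‖A i j‖₊) (Finset.mem_univ s))
    exact Finset.single_le_sum (f := fun j => ‖A s j‖₊) (fun j _ => zero_le) (Finset.mem_univ t)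
  exact_mod_cast h

lemma norm_mono {A B : Matrix (Fin n) (Fin n) ℝ} (hB : ∀ s t, 0 ≤ B s t)
    (hAB : ∀ s t, |A s t| ≤ B s t) : ‖A‖ ≤ ‖B‖ := by
  have h : ‖A‖₊ ≤ ‖B‖₊ := by
    rw [Matrix.linfty_opNNNorm_def, Matrix.linfty_opNNNorm_def]
    refine Finset.sup_mono_fun fun s _ => Finset.sum_le_sum fun t _ => ?_
    rw [← NNReal.coe_le_coe]
    simpa [Real.norm_eq_abs, abs_of_nonneg (hB s t)] using hAB s t
  exact_mod_cast h

lemma map_pow' (A : Matrix (Fin n) (Fin n) ℝ) (m : ℕ) :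
    (A.map (Complex.ofReal : ℝ → ℂ)) ^ m = (A ^ m).map Complex.ofReal := by
  induction m with
  | zero => ext s t; simp [Matrix.map_apply, Matrix.one_apply, apply_ite Complex.ofReal]
  | succ m ih =>
    rw [pow_succ, pow_succ, ih]
    ext s t
    simp [Matrix.map_apply, Matrix.mul_apply]

lemma norm_map_ofReal (A : Matrix (Fin n) (Fin n) ℝ) :
    ‖A.map (Complex.ofReal : ℝ → ℂ)‖ = ‖A‖ := by
  have h : ‖A.map (Complex.ofReal : ℝ → ℂ)‖₊ = ‖A‖₊ := by
    rw [Matrix.linfty_opNNNorm_def, Matrix.linfty_opNNNorm_def]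
    congr 1
    ext s
    congr 1
    ext t
    simp [Matrix.map_apply]
  rw [← coe_nnnorm, ← coe_nnnorm, h]

lemma summable_pow (W : Matrix (Fin n) (Fin n) ℝ)
    (hρ : spectralRadius ℂ (W.map (Complex.ofReal : ℝ → ℂ)) < 1) :
    Summable fun m : ℕ => W ^ m := by
  set a := W.map (Complex.ofReal : ℝ → ℂ) with ha
  obtain ⟨r, hr1, hr2⟩ := ENNReal.lt_iff_exists_nnreal_btwn.mp hρ
  have hgel := spectrum.pow_nnnorm_pow_one_div_tendsto_nhds_spectralRadius a
  have hev : ∀ᶠ m : ℕ in atTop, (‖a ^ m‖₊ : ℝ≥0∞) ^ (1 / (m : ℕ) : ℝ) < r :=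
    hgel.eventually_lt_const hr1
  have hr2' : (r : ℝ) < 1 := by exact_mod_cast hr2
  refine Summable.of_norm_bounded_eventually_nat
    (summable_geometric_of_lt_one r.coe_nonneg hr2') ?_
  filter_upwards [hev, eventually_gt_atTop 0] with m hm hm0
  have hx : (‖a ^ m‖₊ : ℝ≥0∞) ≤ (r : ℝ≥0∞) ^ (m : ℕ) := by
    have h1 : ((‖a ^ m‖₊ : ℝ≥0∞) ^ (1 / (m : ℝ))) ^ (m : ℝ) ≤ (r : ℝ≥0∞) ^ (m : ℝ) :=
      ENNReal.rpow_le_rpow hm.le (by positivity)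
    rwa [← ENNReal.rpow_mul, one_div,
      inv_mul_cancel₀ (by exact_mod_cast hm0.ne' : (m : ℝ) ≠ 0), ENNReal.rpow_one,
      ENNReal.rpow_natCast] at h1
  have hx' : ‖a ^ m‖ ≤ (r : ℝ) ^ m := by
    have : ‖a ^ m‖₊ ≤ r ^ m := by exact_mod_cast hx
    exact_mod_cast this
  rw [ha, map_pow', norm_map_ofReal] at hx'
  simpa using hx'


lemma pow_entry_abs_le {W X : Matrix (Fin n) (Fin n) ℝ} (hW0 : ∀ s t, 0 ≤ W s t)
    (hXW : ∀ s t, |X s t| ≤ W s t) (m : ℕ) (s t : Fin n) :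
    |(X ^ m) s t| ≤ (W ^ m) s t := by
  induction m generalizing s t with
  | zero =>
    simp only [pow_zero]
    rcases eq_or_ne s t with h | h
    · subst h; simp [Matrix.one_apply]
    · simp [Matrix.one_apply, h]
  | succ m ih =>
    rw [pow_succ, pow_succ, Matrix.mul_apply, Matrix.mul_apply]
    refine le_trans (Finset.abs_sum_le_sum_abs _ _) (Finset.sum_le_sum fun u _ => ?_)
    rw [abs_mul]
    exact mul_le_mul (ih s u) (hXW u t) (abs_nonneg _) ((abs_nonneg _).trans (ih s u))

lemma pow_entry_nonneg {W : Matrix (Fin n) (Fin n) ℝ} (hW0 : ∀ s t, 0 ≤ W s t)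
    (m : ℕ) (s t : Fin n) : 0 ≤ (W ^ m) s t := by
  have := pow_entry_abs_le hW0 (fun s t => le_of_eq (abs_of_nonneg (hW0 s t))) m s t
  exact (abs_nonneg _).trans this

/-- entry evaluation as a continuous linear map (w.r.t. the linfty operator norm). -/
noncomputable def entryCLM (s t : Fin n) : Matrix (Fin n) (Fin n) ℝ →L[ℝ] ℝ :=
  LinearMap.mkContinuous
    { toFun := fun A => A s t
      map_add' := fun _ _ => rfl
      map_smul' := fun _ _ => rfl } 1
    (fun A => by rw [one_mul]; exact entry_norm_le A s t)

lemma geom_tsum {Y : Matrix (Fin n) (Fin n) ℝ} (h : Summable fun m : ℕ => Y ^ m) :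
    (1 - Y) * ∑' m : ℕ, Y ^ m = 1 := by
  have h1 : ∑' m : ℕ, Y ^ (m + 1) = (∑' m : ℕ, Y ^ m) - 1 := by
    have h0 := h.tsum_eq_zero_add
    rw [pow_zero] at h0
    rw [h0]
    abel
  have h2 : Y * ∑' m : ℕ, Y ^ m = ∑' m : ℕ, Y ^ (m + 1) := by
    rw [← h.tsum_mul_left]
    exact tsum_congr fun m => (pow_succ' Y m).symm
  rw [sub_mul, one_mul, h2, h1, sub_sub_cancel]

lemma key {W X : Matrix (Fin n) (Fin n) ℝ} (hW0 : ∀ s t, 0 ≤ W s t)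
    (hXW : ∀ s t, |X s t| ≤ W s t)
    (hρ : spectralRadius ℂ (W.map (Complex.ofReal : ℝ → ℂ)) < 1) :
    ∃ SW SX : Matrix (Fin n) (Fin n) ℝ,
      (1 - W) * SW = 1 ∧ (1 - X) * SX = 1 ∧ (∀ s t, 0 ≤ SW s t) ∧
      (∀ s t, |SX s t| ≤ SW s t) := by
  have hWs : Summable fun m : ℕ => W ^ m := summable_pow W hρ
  have hXs : Summable fun m : ℕ => X ^ m := by
    refine Summable.of_norm_bounded hWs.norm fun m => ?_
    exact norm_mono (pow_entry_nonneg hW0 m) (pow_entry_abs_le hW0 hXW m)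
  refine ⟨∑' m : ℕ, W ^ m, ∑' m : ℕ, X ^ m, geom_tsum hWs, geom_tsum hXs, ?_, ?_⟩
  · intro s t
    have hWe : Summable fun m : ℕ => (W ^ m) s t := by
      exact hWs.map (entryCLM s t).toLinearMap (entryCLM s t).continuous
    have : (∑' m : ℕ, W ^ m) s t = ∑' m : ℕ, (W ^ m) s t := by
      exact (entryCLM s t).map_tsum hWs
    rw [this]
    exact tsum_nonneg fun m => pow_entry_nonneg hW0 m s t
  · intro s t
    have hWe : Summable fun m : ℕ => (W ^ m) s t := by
      exact hWs.map (entryCLM s t).toLinearMap (entryCLM s t).continuous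
    have hXe : Summable fun m : ℕ => (X ^ m) s t := by
      exact hXs.map (entryCLM s t).toLinearMap (entryCLM s t).continuous
    have e1 : (∑' m : ℕ, W ^ m) s t = ∑' m : ℕ, (W ^ m) s t := by
      exact (entryCLM s t).map_tsum hWs
    have e2 : (∑' m : ℕ, X ^ m) s t = ∑' m : ℕ, (X ^ m) s t := by
      exact (entryCLM s t).map_tsum hXs
    rw [e1, e2]
    have habs : Summable fun m : ℕ => |(X ^ m) s t| :=
      Summable.of_nonneg_of_le (fun m => abs_nonneg _)
        (fun m => pow_entry_abs_le hW0 hXW m s t) hWe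
    calc |∑' m : ℕ, (X ^ m) s t| ≤ ∑' m : ℕ, |(X ^ m) s t| := by
          have hn : Summable fun m : ℕ => ‖(X ^ m) s t‖ := by
            simpa [Real.norm_eq_abs] using habs
          simpa [Real.norm_eq_abs] using
            norm_tsum_le_tsum_norm (f := fun m : ℕ => (X ^ m) s t) hn
      _ ≤ ∑' m : ℕ, (W ^ m) s t :=
          Summable.tsum_le_tsum (fun m => pow_entry_abs_le hW0 hXW m s t) habs hWe

end Stmt14Aux


theorem stmt_14 (n k : ℕ) (M : Fin (k+1) → Matrix (Fin n) (Fin n) ℝ)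
    (hdiag : ∀ i s, 0 < M i s s)
    (W : Matrix (Fin n) (Fin n) ℝ)
    (hWdef : ∀ s t, W s t = ⨆ i, |(Matrix.diagonal (fun u => M i u u) - M i) s t| / M i s s)
    (hρ : spectralRadius ℂ (W.map (Complex.ofReal : ℝ → ℂ)) < 1)
    (N : Matrix (Fin n) (Fin n) ℝ → ℝ)
    (hN : ∀ A B : Matrix (Fin n) (Fin n) ℝ, (∀ s t, |A s t| ≤ B s t) → N A ≤ N B)
    (d : Fin (k+1) → Fin n → ℝ)
    (hd : ∀ i s, d i s ∈ Set.Icc (0:ℝ) 1) (hsum : ∀ s, ∑ i, d i s = 1)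
    (ℓ : Fin (k+1)) :
    N ((∑ i, Matrix.diagonal (d i) * M i)⁻¹ * Matrix.diagonal (d ℓ)) ≤
      N ((1 - W)⁻¹ * (Matrix.diagonal fun u => M ℓ u u)⁻¹) := by

  classical
  set C : Fin (k+1) → Matrix (Fin n) (Fin n) ℝ :=
    fun i => Matrix.diagonal (fun u => M i u u) - M i with hCdef
  have hW0 : ∀ s t, 0 ≤ W s t := by
    intro s t
    rw [hWdef]
    refine le_ciSup_of_le (Set.Finite.bddAbove (Set.finite_range _)) 0 ?_
    exact div_nonneg (abs_nonneg _) (hdiag 0 s).le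
  have hCle : ∀ i s t, |C i s t| ≤ W s t * M i s s := by
    intro i s t
    have h1 : |C i s t| / M i s s ≤ W s t := by
      rw [hWdef]
      exact le_ciSup (f := fun j => |C j s t| / M j s s)
        (Set.Finite.bddAbove (Set.finite_range _)) i
    calc |C i s t| = |C i s t| / M i s s * M i s s :=
          (div_mul_cancel₀ _ (hdiag i s).ne').symm
      _ ≤ W s t * M i s s := mul_le_mul_of_nonneg_right h1 (hdiag i s).le
  set v : Fin n → ℝ := fun s => ∑ i, d i s * M i s s with hvdef
  have hv : ∀ s, 0 < v s := by
    intro s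
    have hne : (Finset.univ : Finset (Fin (k+1))).Nonempty := ⟨0, Finset.mem_univ 0⟩
    have hc0 : 0 < Finset.univ.inf' hne fun i => M i s s :=
      (Finset.lt_inf'_iff hne).mpr fun i _ => hdiag i s
    calc (0:ℝ) < Finset.univ.inf' hne fun i => M i s s := hc0
      _ = ∑ i, d i s * Finset.univ.inf' hne fun i => M i s s := by
          rw [← Finset.sum_mul, hsum s, one_mul]
      _ ≤ v s := Finset.sum_le_sum fun i _ =>
          mul_le_mul_of_nonneg_left (Finset.inf'_le _ (Finset.mem_univ i)) (hd i s).1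
  set X : Matrix (Fin n) (Fin n) ℝ :=
    Matrix.of (fun s t => (∑ i, d i s * C i s t) / v s) with hXdef
  have hXW : ∀ s t, |X s t| ≤ W s t := by
    intro s t
    have h1 : |∑ i, d i s * C i s t| ≤ W s t * v s := by
      refine (Finset.abs_sum_le_sum_abs _ _).trans ?_
      have hv2 : W s t * v s = ∑ i, W s t * (d i s * M i s s) := by
        simp only [hvdef]; rw [Finset.mul_sum]
      rw [hv2]
      refine Finset.sum_le_sum fun i _ => ?_
      rw [abs_mul, abs_of_nonneg (hd i s).1]
      calc d i s * |C i s t| ≤ d i s * (W s t * M i s s) :=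
            mul_le_mul_of_nonneg_left (hCle i s t) (hd i s).1
        _ = W s t * (d i s * M i s s) := by ring
    have h2 : |X s t| = |∑ i, d i s * C i s t| / v s := by
      simp only [hXdef, Matrix.of_apply]
      rw [abs_div, abs_of_pos (hv s)]
    rw [h2, div_le_iff₀ (hv s)]
    exact h1
  obtain ⟨SW, SX, hSW1, hSX1, hSW0, hSXW⟩ := Stmt14Aux.key hW0 hXW hρ
  set A : Matrix (Fin n) (Fin n) ℝ := ∑ i, Matrix.diagonal (d i) * M i with hAdef
  have hfact : Matrix.diagonal v * (1 - X) = A := by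
    ext s t
    have hCsum : ∑ i, d i s * C i s t
        = (if s = t then v s else 0) - ∑ i, d i s * M i s t := by
      simp only [hCdef, Matrix.sub_apply, Matrix.diagonal_apply, mul_sub]
      rw [Finset.sum_sub_distrib]
      congr 1
      by_cases hst : s = t
      · subst hst; simp [hvdef]
      · simp [hst]
    rw [hAdef, Matrix.sum_apply]
    simp only [Matrix.diagonal_mul, Matrix.sub_apply, Matrix.one_apply, hXdef, Matrix.of_apply]
    rw [mul_sub, mul_div_cancel₀ _ (hv s).ne', hCsum]
    by_cases hst : s = t
    · simp only [if_pos hst]; ring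
    · simp only [if_neg hst]; ring
  have hgoal1 : A * (SX * Matrix.diagonal fun s => (v s)⁻¹) = 1 := by
    rw [← hfact, mul_assoc, ← mul_assoc (1 - X), hSX1, one_mul,
      Matrix.diagonal_mul_diagonal]
    have hone : (fun s => v s * (v s)⁻¹) = fun _ => (1:ℝ) :=
      funext fun s => mul_inv_cancel₀ (hv s).ne'
    rw [hone, Matrix.diagonal_one]
  have hAinv : A⁻¹ = SX * Matrix.diagonal fun s => (v s)⁻¹ :=
    Matrix.inv_eq_right_inv hgoal1
  have hWinv : (1 - W)⁻¹ = SW := Matrix.inv_eq_right_inv hSW1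
  have hΛinv : (Matrix.diagonal fun u => M ℓ u u)⁻¹ = Matrix.diagonal fun u => (M ℓ u u)⁻¹ := by
    refine Matrix.inv_eq_right_inv ?_
    rw [Matrix.diagonal_mul_diagonal]
    have hone : (fun u => M ℓ u u * (M ℓ u u)⁻¹) = fun _ => (1:ℝ) :=
      funext fun u => mul_inv_cancel₀ (hdiag ℓ u).ne'
    rw [hone, Matrix.diagonal_one]
  apply hN
  intro s t
  rw [hAinv, hWinv, hΛinv, mul_assoc SX, Matrix.diagonal_mul_diagonal,
    Matrix.mul_diagonal, Matrix.mul_diagonal]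
  have hnn : 0 ≤ (v t)⁻¹ * d ℓ t := mul_nonneg (inv_nonneg.mpr (hv t).le) (hd ℓ t).1
  rw [abs_mul, abs_of_nonneg hnn]
  refine mul_le_mul (hSXW s t) ?_ hnn (hSW0 s t)
  rw [← div_eq_inv_mul, ← one_div, div_le_div_iff₀ (hv t) (hdiag ℓ t), one_mul]
  have : d ℓ t * M ℓ t t ≤ v t := by
    simp only [hvdef]
    exact Finset.single_le_sum (f := fun i => d i t * M i t t)
      (fun i _ => mul_nonneg (hd i t).1 (hdiag i t).le) (Finset.mem_univ ℓ)
  exact this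
end

section
/- Let (M_0,...,M_k) have the row W-property with constants α_i as defined, and suppose perturbations satisfy ‖ΔM_i‖ ≤ ε_i‖M_i‖ and ‖Δq_i‖ ≤ ε_i‖(−q_i)_+‖ with η := Σ_{i=0}^k ε_i α_i ‖M_i‖ < 1. Let x solve min_i(M_i x + q_i) = 0 and y solve min_i((M_i+ΔM_i) y + q_i+Δq_i) = 0 (both unique). Then ‖x − y‖ / ‖x‖ ≤ 2η/(1−η), provided x ≠ 0. -/
open Matrix

attribute [local instance] Matrix.linftyOpNormedRing

lemma exist_d {k : ℕ} (a b : Fin (k+1) → ℝ) (ha : ⨅ i, a i = 0) (hb : ⨅ i, b i = 0) :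
    ∃ d : Fin (k+1) → ℝ, (∀ i, d i ∈ Set.Icc (0:ℝ) 1) ∧ ∑ i, d i = 1 ∧
      ∑ i, d i * (a i - b i) = 0 := by
  obtain ⟨i0, hi0⟩ := exists_eq_ciInf_of_finite (f := a)
  obtain ⟨i1, hi1⟩ := exists_eq_ciInf_of_finite (f := b)
  have hbd : BddBelow (Set.range b) := Set.Finite.bddBelow (Set.finite_range b)
  have hbd' : BddBelow (Set.range a) := Set.Finite.bddBelow (Set.finite_range a)
  have hc0 : a i0 - b i0 ≤ 0 := by
    have h2 : (0:ℝ) ≤ b i0 := hb ▸ ciInf_le hbd i0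
    have h0 : a i0 = 0 := hi0.trans ha
    linarith
  have hc1 : (0:ℝ) ≤ a i1 - b i1 := by
    have h2 : (0:ℝ) ≤ a i1 := ha ▸ ciInf_le hbd' i1
    have h1 : b i1 = 0 := hi1.trans hb
    linarith
  set f : ℝ → ℝ := fun t => (1 - t) * (a i0 - b i0) + t * (a i1 - b i1) with hf
  have hcont : ContinuousOn f (Set.Icc 0 1) := by fun_prop
  have himg := intermediate_value_Icc (zero_le_one (α := ℝ)) hcont
  have h0mem : (0:ℝ) ∈ Set.Icc (f 0) (f 1) := by
    constructor <;> simp [hf] <;> linarith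
  obtain ⟨t, ht, hft⟩ := himg h0mem
  obtain ⟨ht0, ht1⟩ := ht
  refine ⟨fun i => (1 - t) * (if i = i0 then 1 else 0) + t * (if i = i1 then 1 else 0),
    fun i => ?_, ?_, ?_⟩
  · refine ⟨?_, ?_⟩ <;>
    · simp only [mul_ite, mul_one, mul_zero]
      split_ifs <;> linarith
  · simp [Finset.sum_add_distrib, ← Finset.mul_sum, Finset.sum_ite_eq']
  · have : ∑ i, ((1 - t) * (if i = i0 then 1 else 0) + t * (if i = i1 then 1 else 0)) * (a i - b i)
        = f t := by
      simp only [hf, add_mul, Finset.sum_add_distrib, mul_assoc, ← Finset.mul_sum,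
        ite_mul, one_mul, zero_mul]
      rw [Finset.sum_ite_eq' Finset.univ i0, Finset.sum_ite_eq' Finset.univ i1]
      simp
    rw [this, hft]

lemma sum_mulVec' {n : ℕ} {ι : Type*} (s : Finset ι) (A : ι → Matrix (Fin n) (Fin n) ℝ)
    (v : Fin n → ℝ) : (∑ i ∈ s, A i) *ᵥ v = ∑ i ∈ s, A i *ᵥ v := by
  funext j
  simp only [Matrix.mulVec, dotProduct, Matrix.sum_apply, Finset.sum_mul, Finset.sum_apply]
  exact Finset.sum_comm

theorem stmt_17 (n k : ℕ) (M ΔM : Fin (k+1) → Matrix (Fin n) (Fin n) ℝ)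
    (q Δq : Fin (k+1) → Fin n → ℝ)
    (hW : ∀ d : Fin (k+1) → Fin n → ℝ,
      (∀ i s, d i s ∈ Set.Icc (0:ℝ) 1) → (∀ s, ∑ i, d i s = 1) →
      IsUnit (∑ i, Matrix.diagonal (d i) * M i))
    (α : Fin (k+1) → ℝ)
    (hα : ∀ i, IsGreatest {r : ℝ | ∃ d : Fin (k+1) → Fin n → ℝ,
      (∀ i' s, d i' s ∈ Set.Icc (0:ℝ) 1) ∧ (∀ s, ∑ i', d i' s = 1) ∧
      r = ‖(∑ i', Matrix.diagonal (d i') * M i')⁻¹ * Matrix.diagonal (d i)‖} (α i))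
    (ε : Fin (k+1) → ℝ)
    (hΔM : ∀ i, ‖ΔM i‖ ≤ ε i * ‖M i‖)
    (hΔq : ∀ i, ‖Δq i‖ ≤ ε i * ‖(fun s => max 0 (-(q i s)) : Fin n → ℝ)‖)
    (η : ℝ) (hη : ∑ i, ε i * (α i * ‖M i‖) = η) (hη1 : η < 1)
    (x y : Fin n → ℝ)
    (hx : ∀ s, (⨅ i, (M i *ᵥ x + q i) s) = 0)
    (hy : ∀ s, (⨅ i, ((M i + ΔM i) *ᵥ y + (q i + Δq i)) s) = 0)
    (hx0 : x ≠ 0) :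
    ‖x - y‖ / ‖x‖ ≤ 2 * η / (1 - η) := by
  classical
  -- choose the convex weights
  have hd : ∀ s : Fin n, ∃ d : Fin (k+1) → ℝ, (∀ i, d i ∈ Set.Icc (0:ℝ) 1) ∧ (∑ i, d i = 1) ∧
      ∑ i, d i * ((fun i => (M i *ᵥ x + q i) s) i -
        (fun i => ((M i + ΔM i) *ᵥ y + (q i + Δq i)) s) i) = 0 :=
    fun s => exist_d _ _ (hx s) (hy s)
  choose dd hd1 hd2 hd3 using hd
  set d : Fin (k+1) → Fin n → ℝ := fun i s => dd s i with hdd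
  have hd1' : ∀ i s, d i s ∈ Set.Icc (0:ℝ) 1 := fun i s => hd1 s i
  have hd2' : ∀ s, ∑ i, d i s = 1 := hd2
  set A := ∑ i, Matrix.diagonal (d i) * M i with hA
  have hAu : IsUnit A := hW d hd1' hd2'
  have hAinv : A⁻¹ * A = 1 := Matrix.nonsing_inv_mul A ((Matrix.isUnit_iff_isUnit_det A).mp hAu)
  set r : Fin (k+1) → Fin n → ℝ := fun i => ΔM i *ᵥ y + Δq i with hr
  -- key identity
  have key : A *ᵥ (x - y) = ∑ i, Matrix.diagonal (d i) *ᵥ r i := by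
    rw [hA, sum_mulVec']
    funext s
    rw [← sub_eq_zero]
    have h3 := hd3 s
    simp only [Pi.add_apply, Matrix.add_mulVec] at h3
    simp only [Finset.sum_apply, Pi.sub_apply, ← Finset.sum_sub_distrib,
      ← Matrix.mulVec_mulVec, Matrix.mulVec_diagonal, Matrix.mulVec_sub, hr, Pi.add_apply]
    exact (Finset.sum_congr rfl fun i _ => by ring).trans h3
  -- express x - y
  have hxy : x - y = ∑ i, (A⁻¹ * Matrix.diagonal (d i)) *ᵥ r i := by
    have h1 : x - y = A⁻¹ *ᵥ (A *ᵥ (x - y)) := by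
      rw [Matrix.mulVec_mulVec, hAinv, Matrix.one_mulVec]
    rw [h1, key, ← Matrix.mulVecLin_apply, map_sum]
    simp [Matrix.mulVecLin_apply, Matrix.mulVec_mulVec]
  -- nonnegativity facts
  have hεM : ∀ i, 0 ≤ ε i * ‖M i‖ := fun i => le_trans (norm_nonneg _) (hΔM i)
  have hα0 : ∀ i, 0 ≤ α i := by
    intro i
    obtain ⟨d', -, -, hval⟩ := (hα i).1
    rw [hval]; exact norm_nonneg _
  -- bound on the positive part of -q
  have hqplus : ∀ i, ‖(fun s => max 0 (-(q i s)) : Fin n → ℝ)‖ ≤ ‖M i‖ * ‖x‖ := by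
    intro i
    rw [pi_norm_le_iff_of_nonneg (by positivity)]
    intro s
    have hge : 0 ≤ (M i *ᵥ x + q i) s := by
      have := ciInf_le (Set.Finite.bddBelow (Set.finite_range fun j => (M j *ᵥ x + q j) s)) i
      rw [hx s] at this
      exact this
    have h5 : max 0 (-(q i s)) ≤ ‖(M i *ᵥ x) s‖ := by
      simp only [Pi.add_apply] at hge
      rw [Real.norm_eq_abs]
      rcases le_abs.mpr (Or.inl (by linarith : -(q i s) ≤ (M i *ᵥ x) s)) with h
      exact max_le (abs_nonneg _) h
    calc ‖max 0 (-(q i s))‖ = max 0 (-(q i s)) := by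
          rw [Real.norm_eq_abs, abs_of_nonneg (le_max_left _ _)]
      _ ≤ ‖(M i *ᵥ x) s‖ := h5
      _ ≤ ‖M i *ᵥ x‖ := norm_le_pi_norm _ s
      _ ≤ ‖M i‖ * ‖x‖ := Matrix.linfty_opNorm_mulVec _ _
  -- bound on Δq
  have hΔq2 : ∀ i, ‖Δq i‖ ≤ ε i * ‖M i‖ * ‖x‖ := by
    intro i
    rcases le_or_gt 0 (ε i) with hpos | hneg
    · calc ‖Δq i‖ ≤ ε i * ‖(fun s => max 0 (-(q i s)) : Fin n → ℝ)‖ := hΔq i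
        _ ≤ ε i * (‖M i‖ * ‖x‖) := mul_le_mul_of_nonneg_left (hqplus i) hpos
        _ = ε i * ‖M i‖ * ‖x‖ := by ring
    · have hM0 : ‖M i‖ = 0 := by nlinarith [hεM i, norm_nonneg (M i)]
      have hq0 : ‖(fun s => max 0 (-(q i s)) : Fin n → ℝ)‖ = 0 := by
        have := hqplus i
        rw [hM0, zero_mul] at this
        exact le_antisymm this (norm_nonneg _)
      have := hΔq i
      rw [hq0, mul_zero] at this
      rw [hM0]
      simpa using this
  -- bound on r
  have hri : ∀ i, ‖r i‖ ≤ ε i * ‖M i‖ * (‖x‖ + ‖y‖) := by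
    intro i
    calc ‖r i‖ ≤ ‖ΔM i *ᵥ y‖ + ‖Δq i‖ := norm_add_le _ _
      _ ≤ ‖ΔM i‖ * ‖y‖ + ε i * ‖M i‖ * ‖x‖ :=
          add_le_add (Matrix.linfty_opNorm_mulVec _ _) (hΔq2 i)
      _ ≤ ε i * ‖M i‖ * ‖y‖ + ε i * ‖M i‖ * ‖x‖ :=
          add_le_add_left (mul_le_mul_of_nonneg_right (hΔM i) (norm_nonneg _)) _
      _ = ε i * ‖M i‖ * (‖x‖ + ‖y‖) := by ring
  -- bound on inverse-diagonal products
  have hAd : ∀ i, ‖A⁻¹ * Matrix.diagonal (d i)‖ ≤ α i := by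
    intro i
    exact (hα i).2 ⟨d, hd1', hd2', by rw [hA]⟩
  -- main estimate
  have hmain : ‖x - y‖ ≤ η * (‖x‖ + ‖y‖) := by
    rw [hxy]
    calc ‖∑ i, (A⁻¹ * Matrix.diagonal (d i)) *ᵥ r i‖
        ≤ ∑ i, ‖(A⁻¹ * Matrix.diagonal (d i)) *ᵥ r i‖ := norm_sum_le _ _
      _ ≤ ∑ i, α i * (ε i * ‖M i‖ * (‖x‖ + ‖y‖)) := by
          refine Finset.sum_le_sum fun i _ => ?_
          calc ‖(A⁻¹ * Matrix.diagonal (d i)) *ᵥ r i‖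
              ≤ ‖A⁻¹ * Matrix.diagonal (d i)‖ * ‖r i‖ := Matrix.linfty_opNorm_mulVec _ _
            _ ≤ α i * (ε i * ‖M i‖ * (‖x‖ + ‖y‖)) :=
                mul_le_mul (hAd i) (hri i) (norm_nonneg _) (hα0 i)
      _ = (∑ i, ε i * (α i * ‖M i‖)) * (‖x‖ + ‖y‖) := by
          rw [Finset.sum_mul]; exact Finset.sum_congr rfl fun i _ => by ring
      _ = η * (‖x‖ + ‖y‖) := by rw [hη]
  -- conclude
  have hη0 : 0 ≤ η := by
    rw [← hη]
    exact Finset.sum_nonneg fun i _ => by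
      have := mul_nonneg (hα0 i) (hεM i); nlinarith [hα0 i, hεM i]
  have hxpos : 0 < ‖x‖ := norm_pos_iff.mpr hx0
  have hy2 : ‖y‖ ≤ ‖x‖ + ‖x - y‖ := by
    have := norm_sub_norm_le y x
    have h7 : ‖y - x‖ = ‖x - y‖ := norm_sub_rev y x
    linarith [abs_le.mp (le_refl |‖y‖ - ‖x‖|)]
  rw [div_le_div_iff₀ hxpos (by linarith)]
  nlinarith [mul_le_mul_of_nonneg_left hy2 hη0, hmain]
end
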